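/- Let $a : \mathbb{N} \to \mathbb{N}$ satisfy $a(0) = 0$, $a(1) = 1$, and for $p \geq 2$, $a(p) = \max_{1 \leq k \leq \lceil p/2 \rceil} \{ k + a(k-1) + a(p-k) \}$. Then for all $p \geq 2$, the maximum is attained at $k = \lceil p/2 \rceil$, i.e., $a(p) = \lceil p/2 \rceil + a(\lceil p/2 \rceil - 1) + a(p - \lceil p/2 \rceil)$. -/
import Mathlib

def pcS : ℕ → ℕ
  | 0 => 0
  | n+1 => pcS ((n+1)/2) + (n+1) % 2
decreasing_by exact Nat.div_lt_self (Nat.succ_pos n) one_lt_two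

lemma pcS_odd (n : ℕ) : pcS (2*n+1) = pcS n + 1 := by
  rw [pcS.eq_def]
  have e1 : (2*n+1)/2 = n := by omega
  have e2 : (2*n+1) % 2 = 1 := by omega
  simp [e1, e2]

lemma pcS_even (n : ℕ) : pcS (2*n+2) = pcS (n+1) := by
  rw [pcS.eq_def]
  have e1 : (2*n+2)/2 = n+1 := by omega
  have e2 : (2*n+2) % 2 = 0 := by omega
  simp [e1, e2]

def Ssum (n : ℕ) : ℕ := ∑ k ∈ Finset.range (n+1), pcS k

lemma Ssum_zero : Ssum 0 = 0 := by simp [Ssum, pcS]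

lemma Ssum_succ (n : ℕ) : Ssum (n+1) = Ssum n + pcS (n+1) := Finset.sum_range_succ _ _

lemma Ssum_one : Ssum 1 = 1 := by
  have h1 := pcS_odd 0
  have h2 := Ssum_succ 0
  have h3 := Ssum_zero
  have h0 : pcS 0 = 0 := by simp [pcS]
  simp at h1 h2
  omega

lemma Ssum_odd (n : ℕ) : Ssum (2*n+1) = 2 * Ssum n + n + 1 := by
  induction n with
  | zero => simp [Ssum_one, Ssum_zero]
  | succ m ih =>
    have h1 : Ssum (2*(m+1)+1) = Ssum (2*m+1) + pcS (2*m+2) + pcS (2*(m+1)+1) := by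
      have e : 2*(m+1)+1 = (2*m+2)+1 := by ring
      rw [e, Ssum_succ, show (2*m+2 : ℕ) = (2*m+1)+1 from by ring, Ssum_succ]
    rw [h1, pcS_even, pcS_odd, ih, Ssum_succ]
    ring

lemma Ssum_even (n : ℕ) : Ssum (2*n+2) = Ssum (n+1) + Ssum n + (n+1) := by
  have h1 : Ssum (2*n+2) = Ssum (2*n+1) + pcS (2*n+2) := by
    rw [show (2*n+2 : ℕ) = (2*n+1)+1 from by ring, Ssum_succ]
  rw [h1, pcS_even, Ssum_odd, Ssum_succ]
  ring

lemma pcS_pos : ∀ n, 1 ≤ pcS (n+1) := by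
  intro n
  induction n using Nat.strong_induction_on with
  | _ n ih =>
    rcases Nat.even_or_odd n with h | h
    · obtain ⟨c, rfl⟩ : ∃ c, n = 2*c := ⟨n/2, by rw [Nat.even_iff] at h; omega⟩
      rw [pcS_odd]; omega
    · obtain ⟨c, rfl⟩ := h
      rw [show 2*c+1+1 = 2*c+2 from by ring, pcS_even]
      exact ih c (by omega)

lemma keyS : ∀ N u v, u + v ≤ N → u ≤ v → Ssum u + Ssum v + u + 1 ≤ Ssum (u + v + 1) := by
  intro N
  induction N with
  | zero =>
    intro u v h1 h2
    have hu : u = 0 := by omega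
    have hv : v = 0 := by omega
    subst hu; subst hv
    simp [Ssum_zero, Ssum_one]
  | succ N ih =>
    intro u v hN huv
    rcases Nat.even_or_odd u with hu | hu
    · obtain ⟨a, rfl⟩ : ∃ a, u = 2*a := ⟨u/2, by rw [Nat.even_iff] at hu; omega⟩
      rcases Nat.even_or_odd v with hv | hv
      · -- u = 2a, v = 2b
        obtain ⟨b, rfl⟩ : ∃ b, v = 2*b := ⟨v/2, by rw [Nat.even_iff] at hv; omega⟩
        rcases Nat.eq_zero_or_pos a with rfl | ha
        · -- u = 0
          rcases Nat.eq_zero_or_pos b with rfl | hb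
          · simp [Ssum_zero, Ssum_one]
          · have e : 2*0 + 2*b + 1 = (2*b) + 1 := by ring
            rw [e]
            have h1 := Ssum_succ (2*b)
            have h2 := pcS_odd b
            have h0 : Ssum (2*0) = 0 := Ssum_zero
            omega
        · obtain ⟨a', rfl⟩ : ∃ a', a = a'+1 := ⟨a-1, by omega⟩
          obtain ⟨b', rfl⟩ : ∃ b', b = b'+1 := ⟨b-1, by omega⟩
          have e1 : 2*(a'+1) = 2*a'+2 := by ring
          have e2 : 2*(b'+1) = 2*b'+2 := by ring
          have e3 : 2*(a'+1) + 2*(b'+1) + 1 = 2*(a'+b'+2)+1 := by ring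
          rw [e3, e1, e2, Ssum_even, Ssum_even, Ssum_odd]
          have h1 : Ssum a' + Ssum (b'+1) + a' + 1 ≤ Ssum (a' + (b'+1) + 1) :=
            ih a' (b'+1) (by omega) (by omega)
          have e4 : a' + (b'+1) + 1 = a'+b'+2 := by ring
          rw [e4] at h1
          have h2 : Ssum (a'+1) + Ssum b' + (a'+1) ≤ Ssum (a'+b'+2) := by
            rcases Nat.lt_or_ge a' b' with h | h
            · have := ih (a'+1) b' (by omega) (by omega)
              have e : a'+1+b'+1 = a'+b'+2 := by ring
              rw [e] at this
              omega
            · have hab : a' = b' := by omega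
              subst hab
              have e : a'+a'+2 = 2*a'+2 := by ring
              rw [e, Ssum_even]
          omega
      · -- u = 2a, v = 2b+1, a ≤ b
        obtain ⟨b, rfl⟩ := hv
        rcases Nat.eq_zero_or_pos a with rfl | ha
        · have e : 2*0 + (2*b+1) + 1 = 2*b+2 := by ring
          rw [e, Ssum_even, Ssum_odd]
          have h0 : Ssum (2*0) = 0 := Ssum_zero
          have h1 := Ssum_succ b
          have h2 : 1 ≤ pcS (b+1) := pcS_pos b
          omega
        · obtain ⟨a', rfl⟩ : ∃ a', a = a'+1 := ⟨a-1, by omega⟩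
          have e1 : 2*(a'+1) = 2*a'+2 := by ring
          have e3 : 2*(a'+1) + (2*b+1) + 1 = 2*(a'+b+1)+2 := by ring
          rw [e3, e1, Ssum_even, Ssum_even, Ssum_odd]
          have h1 : Ssum (a'+1) + Ssum b + (a'+1) + 1 ≤ Ssum (a'+1+b+1) :=
            ih (a'+1) b (by omega) (by omega)
          have h2 : Ssum a' + Ssum b + a' + 1 ≤ Ssum (a'+b+1) :=
            ih a' b (by omega) (by omega)
          have e4 : a'+1+b+1 = a'+b+1+1 := by ring
          rw [e4] at h1
          omega
    · obtain ⟨a, rfl⟩ := hu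
      rcases Nat.even_or_odd v with hv | hv
      · -- u = 2a+1, v = 2b, a < b
        obtain ⟨b, rfl⟩ : ∃ b, v = 2*b := ⟨v/2, by rw [Nat.even_iff] at hv; omega⟩
        obtain ⟨b', rfl⟩ : ∃ b', b = b'+1 := ⟨b-1, by omega⟩
        have e2 : 2*(b'+1) = 2*b'+2 := by ring
        have e3 : (2*a+1) + 2*(b'+1) + 1 = 2*(a+b'+1)+2 := by ring
        rw [e3, e2, Ssum_even, Ssum_even, Ssum_odd]
        have h1 : Ssum a + Ssum (b'+1) + a + 1 ≤ Ssum (a+(b'+1)+1) :=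
          ih a (b'+1) (by omega) (by omega)
        have h2 : Ssum a + Ssum b' + a + 1 ≤ Ssum (a+b'+1) :=
          ih a b' (by omega) (by omega)
        have e4 : a+(b'+1)+1 = a+b'+1+1 := by ring
        rw [e4] at h1
        omega
      · -- u = 2a+1, v = 2b+1, a ≤ b
        obtain ⟨b, rfl⟩ := hv
        have e3 : (2*a+1) + (2*b+1) + 1 = 2*(a+b+1)+1 := by ring
        rw [e3, Ssum_odd, Ssum_odd, Ssum_odd]
        have h1 : Ssum a + Ssum b + a + 1 ≤ Ssum (a+b+1) :=
          ih a b (by omega) (by omega)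
        omega

lemma Ssum_balanced : ∀ q, 2 ≤ q →
    Ssum q = (q+1)/2 + Ssum ((q+1)/2 - 1) + Ssum (q - (q+1)/2) := by
  intro q hq
  rcases Nat.even_or_odd q with h | h
  · obtain ⟨n', rfl⟩ : ∃ n', q = 2*n'+2 := ⟨q/2 - 1, by rw [Nat.even_iff] at h; omega⟩
    have e1 : (2*n'+2+1)/2 = n'+1 := by omega
    have e2 : (n'+1) - 1 = n' := by omega
    have e3 : 2*n'+2 - (n'+1) = n'+1 := by omega
    rw [e1, e2, e3, Ssum_even]
    ring
  · obtain ⟨n, rfl⟩ := h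
    have e1 : (2*n+1+1)/2 = n+1 := by omega
    have e2 : (n+1) - 1 = n := by omega
    have e3 : 2*n+1 - (n+1) = n := by omega
    rw [e1, e2, e3, Ssum_odd]
    ring

theorem stmt_3 (a : ℕ → ℕ) (ha0 : a 0 = 0) (ha1 : a 1 = 1)
    (harec : ∀ p, 2 ≤ p →
      a p = (Finset.Icc 1 ((p + 1) / 2)).sup (fun k => k + a (k - 1) + a (p - k))) :
    ∀ p, 2 ≤ p → a p = (p + 1) / 2 + a ((p + 1) / 2 - 1) + a (p - (p + 1) / 2) := by
  have haS : ∀ n, a n = Ssum n := by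
    intro n
    induction n using Nat.strong_induction_on with
    | _ n ih =>
      match n with
      | 0 => rw [ha0, Ssum_zero]
      | 1 => rw [ha1, Ssum_one]
      | (q+2) =>
        rw [harec (q+2) (by omega)]
        set p := q + 2 with hp
        have hp2 : 2 ≤ p := by omega
        apply le_antisymm
        · apply Finset.sup_le
          intro k hk
          rw [Finset.mem_Icc] at hk
          obtain ⟨hk1, hk2⟩ := hk
          have hkp : k ≤ p := by omega
          have h1 : a (k-1) = Ssum (k-1) := ih (k-1) (by omega)
          have h2 : a (p-k) = Ssum (p-k) := ih (p-k) (by omega)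
          rw [h1, h2]
          have hle : (k-1) ≤ (p-k) := by omega
          have hkey := keyS ((k-1)+(p-k)) (k-1) (p-k) le_rfl hle
          have e : (k-1) + (p-k) + 1 = p := by omega
          rw [e] at hkey
          omega
        · set m := (p+1)/2 with hm
          have hm1 : 1 ≤ m := by omega
          have hmem : m ∈ Finset.Icc 1 m := Finset.mem_Icc.mpr ⟨hm1, le_rfl⟩
          have hle : m + a (m-1) + a (p-m) ≤
              (Finset.Icc 1 m).sup (fun k => k + a (k-1) + a (p-k)) :=
            Finset.le_sup (f := fun k => k + a (k-1) + a (p-k)) hmem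
          have h1 : a (m-1) = Ssum (m-1) := ih (m-1) (by omega)
          have h2 : a (p-m) = Ssum (p-m) := ih (p-m) (by omega)
          have hbal := Ssum_balanced p hp2
          rw [h1, h2] at hle
          rw [← hm] at hbal
          omega
  intro p hp
  simp only [haS]
  exact Ssum_balanced p hp
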